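/- There exists a constant C > 0 (depending only on ψ) such that for all sufficiently large L > 0, the integral ∫_{I₁} log|τ_a'| dm ≥ -C/L, where I₁ = {x : |τ_a'(x)| ≤ 1}. -/

import Mathlib

open MeasureTheory Set ENNReal


lemma my_periodic_deriv (f : ℝ → ℝ) (h : Function.Periodic f 1) :
    Function.Periodic (deriv f) 1 := by
  intro x
  have : (fun y => f (y + 1)) = f := funext h
  rw [← deriv_comp_add_const f 1 x, this]

lemma my_loclip (φ : ℝ → ℝ) (hd : Differentiable ℝ φ) (hc : Continuous (deriv φ))
    (z : ℝ) (hz : deriv φ z ≠ 0) :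
    ∃ r > 0, ∀ x ∈ Icc (z - r) (z + r), ∀ y ∈ Icc (z - r) (z + r),
      (|deriv φ z| / 2) * |x - y| ≤ |φ x - φ y| := by
  have h2 : 0 < |deriv φ z| / 2 := by positivity
  obtain ⟨r, hr, hball⟩ := Metric.continuousAt_iff.mp (hc.continuousAt (x := z)) _ h2
  refine ⟨r / 2, by linarith, ?_⟩
  have key : ∀ w ∈ Icc (z - r/2) (z + r/2), |deriv φ z| / 2 ≤ |deriv φ w| := by
    intro w hw
    have : dist w z < r := by
      rw [Real.dist_eq]
      rw [mem_Icc] at hw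
      rw [abs_lt]; constructor <;> linarith
    have := hball this
    rw [Real.dist_eq] at this
    have h3 := abs_sub_abs_le_abs_sub (deriv φ w) (deriv φ z)
    have := neg_abs_le (deriv φ w - deriv φ z)
    linarith [abs_sub_abs_le_abs_sub (deriv φ z) (deriv φ w), (abs_sub_comm (deriv φ z) (deriv φ w))]
  intro x hx y hy
  rcases lt_trichotomy x y with hxy | hxy | hxy
  · obtain ⟨ξ, hξ, hslope⟩ := exists_deriv_eq_slope φ hxy (hd.continuous.continuousOn)
      (hd.differentiableOn)
    have hξ' : ξ ∈ Icc (z - r/2) (z + r/2) := by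
      rw [mem_Icc] at hx hy ⊢
      rcases hξ with ⟨h1, h2⟩
      constructor <;> linarith
    have hk := key ξ hξ'
    have : |φ y - φ x| = |deriv φ ξ| * (y - x) := by
      rw [hslope, abs_div, abs_of_pos (by linarith : (0:ℝ) < y - x),
        div_mul_cancel₀ _ (by linarith : (y - x) ≠ 0)]
    rw [abs_sub_comm (φ x) (φ y), this, abs_sub_comm x y, abs_of_pos (by linarith : (0:ℝ) < y - x)]
    exact mul_le_mul_of_nonneg_right hk (by linarith)
  · simp [hxy]
  · obtain ⟨ξ, hξ, hslope⟩ := exists_deriv_eq_slope φ hxy (hd.continuous.continuousOn)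
      (hd.differentiableOn)
    have hξ' : ξ ∈ Icc (z - r/2) (z + r/2) := by
      rw [mem_Icc] at hx hy ⊢
      rcases hξ with ⟨h1, h2⟩
      constructor <;> linarith
    have hk := key ξ hξ'
    have : |φ x - φ y| = |deriv φ ξ| * (x - y) := by
      rw [hslope, abs_div, abs_of_pos (by linarith : (0:ℝ) < x - y),
        div_mul_cancel₀ _ (by linarith : (x - y) ≠ 0)]
    rw [this, abs_of_pos (by linarith : (0:ℝ) < x - y)]
    exact mul_le_mul_of_nonneg_right hk (by linarith)

lemma my_measure_bound (φ : ℝ → ℝ) (hd : Differentiable ℝ φ) (hφc : Continuous φ)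
    (hdc : Continuous (deriv φ)) (hper : Function.Periodic φ 1)
    (hper' : Function.Periodic (deriv φ) 1)
    (N : ℕ) (hN : 0 < N) (c : Fin N → ℝ) (hc01 : ∀ i, c i ∈ Ico (0:ℝ) 1)
    (hcrit : ∀ x ∈ Ico (0:ℝ) 1, φ x = 0 ↔ ∃ i, c i = x)
    (hnd : ∀ i, deriv φ (c i) ≠ 0) :
    ∃ K > 0, ∃ δ > 0, ∀ a b : ℝ, -δ ≤ a → b ≤ δ →
      volume {x ∈ Ico (0:ℝ) 1 | φ x ∈ Icc a b} ≤ ENNReal.ofReal (K * (b - a)) := by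
  classical
  set z : Fin N × Bool → ℝ := fun p => c p.1 + if p.2 then 1 else 0 with hzdef
  have hz0 : ∀ p, φ (z p) = 0 := by
    rintro ⟨i, b⟩
    have h0 : φ (c i) = 0 := (hcrit (c i) (hc01 i)).mpr ⟨i, rfl⟩
    cases b
    · simpa [hzdef] using h0
    · simpa [hzdef] using (hper (c i)).trans h0
  have hz' : ∀ p, deriv φ (z p) ≠ 0 := by
    rintro ⟨i, b⟩
    cases b
    · simpa [hzdef] using hnd i
    · simpa [hzdef, hper' (c i)] using hnd i
  choose r hr hlip using fun p => my_loclip φ hd hdc (z p) (hz' p)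
  set U : Set ℝ := ⋃ p, Ioo (z p - r p) (z p + r p) with hU
  have hUopen : IsOpen U := isOpen_iUnion fun p => isOpen_Ioo
  set Kc : Set ℝ := Icc (0:ℝ) 1 \ U with hKc
  have hKcomp : IsCompact Kc := isCompact_Icc.diff hUopen
  have hnz : ∀ x ∈ Kc, φ x ≠ 0 := by
    rintro x ⟨hx01, hxU⟩ h0
    rcases lt_or_eq_of_le hx01.2 with hx1 | hx1
    · obtain ⟨i, hi⟩ := (hcrit x ⟨hx01.1, hx1⟩).mp h0
      exact hxU (mem_iUnion.mpr ⟨(i, false), by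
        simp only [hzdef, mem_Ioo]
        constructor <;> simp [hi] <;> linarith [hr (i, false)]⟩)
    · have h0' : φ 0 = 0 := by
        have := hper 0; simp at this; rw [← hx1] at this; rw [this] at h0; exact h0
      obtain ⟨i, hi⟩ := (hcrit 0 ⟨le_refl 0, one_pos⟩).mp h0'
      exact hxU (mem_iUnion.mpr ⟨(i, true), by
        simp only [hzdef, mem_Ioo]
        constructor <;> simp [← hi, ← hx1] <;> linarith [hr (i, true)]⟩)
  obtain ⟨η, hη, hmin⟩ : ∃ η > 0, ∀ x ∈ Kc, η ≤ |φ x| := by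
    rcases eq_empty_or_nonempty Kc with he | hne
    · exact ⟨1, one_pos, by simp [he]⟩
    · obtain ⟨x₀, hx₀, hminOn⟩ := hKcomp.exists_isMinOn hne
        ((continuous_abs.comp hφc).continuousOn)
      exact ⟨|φ x₀|, abs_pos.mpr (hnz x₀ hx₀), fun x hx => hminOn hx⟩
  set K : ℝ := ∑ p : Fin N × Bool, 4 / |deriv φ (z p)| with hK
  have hKpos : 0 < K := by
    apply Finset.sum_pos
    · intro p _
      have := hz' p
      positivity
    · haveI : Nonempty (Fin N) := ⟨⟨0, hN⟩⟩
      exact Finset.univ_nonempty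
  refine ⟨K, hKpos, η / 2, by positivity, ?_⟩
  intro a b ha hb
  set T := {x ∈ Ico (0:ℝ) 1 | φ x ∈ Icc a b} with hT
  rcases eq_empty_or_nonempty T with he | ⟨w, hw⟩
  · simp [he]
  have hab : a ≤ b := le_trans hw.2.1 hw.2.2
  -- coverage
  have hcover : T ⊆ ⋃ p, (Icc (z p - r p) (z p + r p) ∩ φ ⁻¹' Icc a b) := by
    intro x hx
    have hxI : x ∈ Icc (0:ℝ) 1 := ⟨hx.1.1, le_of_lt hx.1.2⟩
    have hxU : x ∈ U := by
      by_contra hxu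
      have hxK : x ∈ Kc := ⟨hxI, hxu⟩
      have h1 := hmin x hxK
      have h2 : |φ x| ≤ η / 2 := abs_le.mpr ⟨le_trans ha hx.2.1, le_trans hx.2.2 hb⟩
      linarith
    obtain ⟨p, hp⟩ := mem_iUnion.mp hxU
    exact mem_iUnion.mpr ⟨p, ⟨Ioo_subset_Icc_self hp, hx.2⟩⟩
  have hpiece : ∀ p : Fin N × Bool,
      volume (Icc (z p - r p) (z p + r p) ∩ φ ⁻¹' Icc a b)
        ≤ ENNReal.ofReal (4 / |deriv φ (z p)| * (b - a)) := by
    intro p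
    set S := Icc (z p - r p) (z p + r p) ∩ φ ⁻¹' Icc a b with hS
    rcases eq_empty_or_nonempty S with he' | ⟨x₀, hx₀⟩
    · simp [he']
    have hρ : 0 < |deriv φ (z p)| / 2 := by have := hz' p; positivity
    set D : ℝ := (b - a) / (|deriv φ (z p)| / 2) with hD
    have hsub : S ⊆ Icc (x₀ - D) (x₀ + D) := by
      intro y hy
      have hl := hlip p y hy.1 x₀ hx₀.1
      have hv : |φ y - φ x₀| ≤ b - a := by
        have h1 := hy.2; have h2 := hx₀.2
        rw [mem_preimage, mem_Icc] at h1 h2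
        rw [abs_le]; constructor <;> linarith
      have : |y - x₀| ≤ D := by
        rw [hD, le_div_iff₀ hρ, mul_comm]
        linarith
      rw [mem_Icc]
      rw [abs_le] at this
      constructor <;> linarith [this.1, this.2]
    have hne : |deriv φ (z p)| ≠ 0 := abs_ne_zero.mpr (hz' p)
    have h2D : 2 * D = 4 / |deriv φ (z p)| * (b - a) := by
      rw [hD]; field_simp; ring
    calc volume S ≤ volume (Icc (x₀ - D) (x₀ + D)) := measure_mono hsub
      _ = ENNReal.ofReal (2 * D) := by rw [Real.volume_Icc]; congr 1; ring
      _ = ENNReal.ofReal (4 / |deriv φ (z p)| * (b - a)) := by rw [h2D]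
  calc volume T ≤ volume (⋃ p, (Icc (z p - r p) (z p + r p) ∩ φ ⁻¹' Icc a b)) :=
        measure_mono hcover
    _ ≤ ∑' p, volume (Icc (z p - r p) (z p + r p) ∩ φ ⁻¹' Icc a b) := measure_iUnion_le _
    _ = ∑ p : Fin N × Bool, volume (Icc (z p - r p) (z p + r p) ∩ φ ⁻¹' Icc a b) :=
        tsum_fintype _
    _ ≤ ∑ p : Fin N × Bool, ENNReal.ofReal (4 / |deriv φ (z p)| * (b - a)) :=
        Finset.sum_le_sum fun p _ => hpiece p
    _ = ENNReal.ofReal (∑ p : Fin N × Bool, 4 / |deriv φ (z p)| * (b - a)) := by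
        rw [ENNReal.ofReal_sum_of_nonneg]
        intro p _
        exact mul_nonneg (by positivity) (by linarith)
    _ = ENNReal.ofReal (K * (b - a)) := by rw [hK, Finset.sum_mul]


lemma my_log_le (y : ℝ) (hy : 0 ≤ y) : -Real.log y ≤ 2 / Real.sqrt y := by
  rcases eq_or_lt_of_le hy with h | h
  · simp [← h]
  · have hs : 0 < Real.sqrt y := Real.sqrt_pos.mpr h
    have h1 : Real.log (Real.sqrt y)⁻¹ ≤ (Real.sqrt y)⁻¹ - 1 :=
      Real.log_le_sub_one_of_pos (by positivity)
    rw [Real.log_inv] at h1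
    have h2 : Real.log (Real.sqrt y) = Real.log y / 2 := Real.log_sqrt hy
    have h3 : 2 / Real.sqrt y = 2 * (Real.sqrt y)⁻¹ := by ring
    rw [h3]
    linarith

/-- There is a constant `C > 0` (depending only on `ψ`) such that for all
sufficiently large `L`, `∫_{I₁} log|τ_a'| dm ≥ -C/L`, where `τ_a'(x) = 1 + Lψ'(x)` and
`I₁ = {x : |τ_a'(x)| ≤ 1}` (one period of it). -/
theorem log_integral_over_I1 (ψ : ℝ → ℝ) (hψ : ContDiff ℝ 2 ψ)
    (hper : Function.Periodic ψ 1)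
    (N : ℕ) (hN : 0 < N) (c : Fin N → ℝ)
    (hc : ∀ i, c i ∈ Set.Ico (0:ℝ) 1) (hinj : Function.Injective c)
    (hcrit : ∀ x ∈ Set.Ico (0:ℝ) 1, deriv ψ x = 0 ↔ ∃ i, c i = x)
    (hnd : ∀ i, deriv (deriv ψ) (c i) ≠ 0) :
    ∃ C > 0, ∃ L₀ : ℝ, ∀ L ≥ L₀,
      ∫ x in {x : ℝ | |1 + L * deriv ψ x| ≤ 1} ∩ Set.Ico (0:ℝ) 1,
          Real.log |1 + L * deriv ψ x| ∂volume
        ≥ -C / L := by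
  have h11 : ContDiff ℝ (1 + 1 : ℕ) ψ := by exact_mod_cast hψ
  have h1 : ContDiff ℝ 1 (deriv ψ) := (contDiff_succ_iff_deriv.mp h11).2.2
  have hd : Differentiable ℝ (deriv ψ) := h1.differentiable one_ne_zero
  have hφc : Continuous (deriv ψ) := h1.continuous
  have hdc : Continuous (deriv (deriv ψ)) := h1.continuous_deriv le_rfl
  have hperφ := my_periodic_deriv ψ hper
  have hperφ' := my_periodic_deriv (deriv ψ) hperφ
  obtain ⟨K, hK, δ, hδ, hM⟩ :=
    my_measure_bound (deriv ψ) hd hφc hdc hperφ hperφ' N hN c hc hcrit hnd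
  refine ⟨8 * K, by positivity, max 1 (4 / δ), ?_⟩
  intro L hL
  have hL1 : (1:ℝ) ≤ L := le_trans (le_max_left _ _) hL
  have hL0 : 0 < L := by linarith
  have h4δ : 4 / δ ≤ L := le_trans (le_max_right _ _) hL
  have h4 : 4 ≤ L * δ := (div_le_iff₀ hδ).mp h4δ
  have h2L : 2 / L ≤ δ / 2 := by
    rw [div_le_div_iff₀ hL0 two_pos]; nlinarith
  set S : Set ℝ := {x : ℝ | |1 + L * deriv ψ x| ≤ 1} ∩ Set.Ico (0:ℝ) 1 with hS
  have hYc : Continuous (fun x => |1 + L * deriv ψ x|) :=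
    (continuous_const.add (continuous_const.mul hφc)).abs
  have hSm : MeasurableSet S :=
    ((hYc.measurable (measurableSet_Iic (a := (1:ℝ)))) : MeasurableSet _).inter
      measurableSet_Ico
  -- φ-range on S
  have hSrange : ∀ x ∈ S, deriv ψ x ∈ Icc (-(2/L)) 0 := by
    intro x hx
    have h := abs_le.mp (show |1 + L * deriv ψ x| ≤ 1 from hx.1)
    constructor
    · rw [← neg_div, div_le_iff₀ hL0, mul_comm]
      linarith [h.1]
    · nlinarith [h.2]
  -- Step 1 : integral = - toReal of lintegral
  set g : ℝ → ℝ := fun x => Real.log |1 + L * deriv ψ x| with hg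
  have hgm : Measurable g := Real.measurable_log.comp hYc.measurable
  have hint : ∫ x in S, g x ∂volume
      = -(∫⁻ x in S, ENNReal.ofReal (-(g x)) ∂volume).toReal := by
    have hnn : 0 ≤ᵐ[volume.restrict S] fun x => -(g x) := by
      refine (ae_restrict_iff' hSm).mpr (ae_of_all _ fun x hx => ?_)
      have : g x ≤ 0 := Real.log_nonpos (abs_nonneg _) hx.1
      show (0:ℝ) ≤ -g x
      linarith
    have := integral_eq_lintegral_of_nonneg_ae hnn
      (hgm.neg.aestronglyMeasurable (α := ℝ))
    rw [← this, integral_neg]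
    ring
  rw [hS] at hint ⊢
  rw [hint]
  -- Step 2+3 : bound the lintegral
  have hkey : (∫⁻ x in S, ENNReal.ofReal (-(g x)) ∂volume)
      ≤ ENNReal.ofReal (8 * K / L) := by
    set h : ℝ → ℝ := fun x => 2 / Real.sqrt |1 + L * deriv ψ x| with hh
    have hhm : Measurable h :=
      measurable_const.div (Real.continuous_sqrt.measurable.comp hYc.measurable)
    have step2 : (∫⁻ x in S, ENNReal.ofReal (-(g x)) ∂volume)
        ≤ ∫⁻ x in S, ENNReal.ofReal (h x) ∂volume :=
      lintegral_mono fun x => ENNReal.ofReal_le_ofReal (my_log_le _ (abs_nonneg _))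
    have step3 : (∫⁻ x in S, ENNReal.ofReal (h x) ∂volume)
        = ∫⁻ t in Ioi (0:ℝ), (volume.restrict S) {x | t < h x} :=
      lintegral_eq_lintegral_meas_lt (volume.restrict S)
        (ae_of_all _ fun x => by positivity) hhm.aemeasurable
    have bound1 : ∀ t : ℝ, (volume.restrict S) {x | t < h x}
        ≤ ENNReal.ofReal (K * (2 / L)) := by
      intro t
      rw [Measure.restrict_apply' hSm]
      calc volume ({x | t < h x} ∩ S)
          ≤ volume {x | x ∈ Ico (0:ℝ) 1 ∧ deriv ψ x ∈ Icc (-(2/L)) 0} := by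
            apply measure_mono
            rintro x ⟨_, hxS⟩
            exact ⟨hxS.2, hSrange x hxS⟩
        _ ≤ ENNReal.ofReal (K * (0 - -(2/L))) := hM _ _ (by linarith) (by linarith)
        _ = ENNReal.ofReal (K * (2/L)) := by norm_num
    have bound2 : ∀ t : ℝ, 2 ≤ t → (volume.restrict S) {x | t < h x}
        ≤ ENNReal.ofReal (8 * K / L * (t^2)⁻¹) := by
      intro t ht
      have ht0 : 0 < t := by linarith
      rw [Measure.restrict_apply' hSm]
      set ε : ℝ := 4 / t^2 with hε
      have hε0 : 0 < ε := by positivity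
      have hε1 : ε ≤ 1 := by rw [hε, div_le_one (by positivity)]; nlinarith
      calc volume ({x | t < h x} ∩ S)
          ≤ volume {x | x ∈ Ico (0:ℝ) 1 ∧
              deriv ψ x ∈ Icc (-((1+ε)/L)) ((ε-1)/L)} := by
            apply measure_mono
            rintro x ⟨hxh, hxS⟩
            refine ⟨hxS.2, ?_⟩
            have hth : t < h x := hxh
            have hYnn : (0:ℝ) ≤ |1 + L * deriv ψ x| := abs_nonneg _
            have hs0 : 0 < Real.sqrt |1 + L * deriv ψ x| := by
              rcases lt_or_eq_of_le (Real.sqrt_nonneg |1 + L * deriv ψ x|) with hlt | heq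
              · exact hlt
              · exfalso
                have hx0 : h x = 0 := by rw [hh]; simp [← heq]
                rw [hx0] at hth; linarith
            have htY : t * Real.sqrt |1 + L * deriv ψ x| < 2 := (lt_div_iff₀ hs0).mp hth
            have hYlt : |1 + L * deriv ψ x| < ε := by
              rw [hε, lt_div_iff₀ (by positivity)]
              nlinarith [Real.sq_sqrt hYnn, Real.sqrt_nonneg |1 + L * deriv ψ x|,
                mul_nonneg ht0.le (Real.sqrt_nonneg |1 + L * deriv ψ x|)]
            have habs := abs_lt.mp hYlt
            constructor
            · rw [← neg_div, div_le_iff₀ hL0, mul_comm]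
              linarith [habs.1]
            · rw [le_div_iff₀ hL0, mul_comm]
              linarith [habs.2]
        _ ≤ ENNReal.ofReal (K * ((ε-1)/L - -((1+ε)/L))) := by
            apply hM
            · have h1ε : (1+ε)/L ≤ 2/L := by gcongr; linarith
              linarith
            · have : (ε-1)/L ≤ 0 := div_nonpos_of_nonpos_of_nonneg (by linarith) hL0.le
              linarith
        _ = ENNReal.ofReal (8 * K / L * (t^2)⁻¹) := by
            congr 1
            rw [hε]
            field_simp
            ring
    have piece1 : (∫⁻ t in Ioc (0:ℝ) 2, (volume.restrict S) {x | t < h x})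
        ≤ ENNReal.ofReal (4 * K / L) := by
      calc (∫⁻ t in Ioc (0:ℝ) 2, (volume.restrict S) {x | t < h x})
          ≤ ∫⁻ _ in Ioc (0:ℝ) 2, ENNReal.ofReal (K * (2/L)) :=
            setLIntegral_mono' measurableSet_Ioc (fun t _ => bound1 t)
        _ = ENNReal.ofReal (K * (2/L)) * volume (Ioc (0:ℝ) 2) := setLIntegral_const _ _
        _ = ENNReal.ofReal (4 * K / L) := by
            rw [Real.volume_Ioc, ← ENNReal.ofReal_mul (by positivity)]
            congr 1
            field_simp
            ring
    have hint2 : IntegrableOn (fun t : ℝ => (t^2)⁻¹) (Ioi (2:ℝ)) := by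
      refine (integrableOn_Ioi_rpow_of_lt (by norm_num : (-2:ℝ) < -1) two_pos).congr_fun
        (fun x hx => ?_) measurableSet_Ioi
      have hx0 : (0:ℝ) < x := lt_trans two_pos hx
      show x ^ (-2:ℝ) = (x ^ 2)⁻¹
      rw [Real.rpow_neg hx0.le, show ((2:ℝ)) = ((2:ℕ):ℝ) from by norm_num,
        Real.rpow_natCast]
    have hval : ∫ t in Ioi (2:ℝ), (t^2)⁻¹ = 1/2 := by
      have heq : ∀ x ∈ Ioi (2:ℝ), (x^2)⁻¹ = x ^ (-2:ℝ) := by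
        intro x hx
        have hx0 : (0:ℝ) < x := lt_trans two_pos hx
        rw [Real.rpow_neg hx0.le, show ((2:ℝ)) = ((2:ℕ):ℝ) from by norm_num,
          Real.rpow_natCast]
      rw [setIntegral_congr_fun measurableSet_Ioi heq,
        integral_Ioi_rpow_of_lt (by norm_num : (-2:ℝ) < -1) two_pos]
      rw [show (-2:ℝ) + 1 = -1 by norm_num, Real.rpow_neg_one]
      norm_num
    have piece2 : (∫⁻ t in Ioi (2:ℝ), (volume.restrict S) {x | t < h x})
        ≤ ENNReal.ofReal (4 * K / L) := by
      calc (∫⁻ t in Ioi (2:ℝ), (volume.restrict S) {x | t < h x})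
          ≤ ∫⁻ t in Ioi (2:ℝ), ENNReal.ofReal (8 * K / L * (t^2)⁻¹) :=
            setLIntegral_mono' measurableSet_Ioi (fun t ht => bound2 t (le_of_lt ht))
        _ = ∫⁻ t in Ioi (2:ℝ), ENNReal.ofReal (8 * K / L) * ENNReal.ofReal ((t^2)⁻¹) := by
            simp_rw [← ENNReal.ofReal_mul (by positivity : (0:ℝ) ≤ 8 * K / L)]
        _ = ENNReal.ofReal (8 * K / L) * ∫⁻ t in Ioi (2:ℝ), ENNReal.ofReal ((t^2)⁻¹) :=
            lintegral_const_mul' _ _ ENNReal.ofReal_ne_top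
        _ = ENNReal.ofReal (8 * K / L) * ENNReal.ofReal (1/2) := by
            rw [← ofReal_integral_eq_lintegral_ofReal hint2
              (ae_of_all _ fun t => by positivity), hval]
        _ = ENNReal.ofReal (4 * K / L) := by
            rw [← ENNReal.ofReal_mul (by positivity)]
            congr 1
            ring
    calc (∫⁻ x in S, ENNReal.ofReal (-(g x)) ∂volume)
        ≤ ∫⁻ t in Ioi (0:ℝ), (volume.restrict S) {x | t < h x} := step2.trans_eq step3
      _ = (∫⁻ t in Ioc (0:ℝ) 2, (volume.restrict S) {x | t < h x})
          + ∫⁻ t in Ioi (2:ℝ), (volume.restrict S) {x | t < h x} := by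
          rw [← lintegral_union measurableSet_Ioi (Ioc_disjoint_Ioi le_rfl),
            Ioc_union_Ioi_eq_Ioi (by norm_num : (0:ℝ) ≤ 2)]
      _ ≤ ENNReal.ofReal (4 * K / L) + ENNReal.ofReal (4 * K / L) := add_le_add piece1 piece2
      _ = ENNReal.ofReal (8 * K / L) := by
          rw [← ENNReal.ofReal_add (by positivity) (by positivity)]
          congr 1
          ring
  rw [← hS]
  have hle := ENNReal.toReal_mono (by simp) hkey
  rw [ENNReal.toReal_ofReal (by positivity)] at hle
  have : -(8 * K) / L = -(8 * K / L) := by ring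
  rw [ge_iff_le, this]
  exact neg_le_neg hle
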